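/- The positive part of log|f′| is not integrable with respect to μ̃_P: ∫ max{0, log|f′(x)|} dμ̃_P(x) = +∞. (Here log|f′(x)| is defined for μ̃_P-almost every x, since μ̃_P({c̃}) = 0 and f is differentiable off c̃.) -/

import Mathlib

open MeasureTheory Filter Set Topology
open scoped ENNReal NNReal

/-- ℕ-indexed Fibonacci numbers: 1,2,3,5,8,... -/
def Sfn : ℕ → ℕ
  | 0 => 1
  | 1 => 2
  | (n+2) => Sfn (n+1) + Sfn n

lemma Sfn_add2 (n : ℕ) : Sfn (n+2) = Sfn (n+1) + Sfn n := rfl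

lemma Sfn_pos (n : ℕ) : 0 < Sfn n := by
  induction n using Nat.strong_induction_on with
  | _ n ih =>
    match n with
    | 0 => decide
    | 1 => decide
    | (m+2) => exact Nat.add_pos_left (ih (m+1) (by omega)) _

lemma Sfn_succ (j : ℕ) : Sfn (j+1) = Sfn j + Sfn (j-1) := by
  match j with
  | 0 => decide
  | (m+1) => rfl

lemma Sfn_lt_succ (n : ℕ) : Sfn n < Sfn (n+1) := by
  match n with
  | 0 => decide
  | (m+1) => exact Nat.lt_add_of_pos_right (Sfn_pos m)

lemma Sfn_strictMono : StrictMono Sfn := strictMono_nat_of_lt_succ Sfn_lt_succ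

lemma Sfn_mono : Monotone Sfn := Sfn_strictMono.monotone

lemma Sfn_ge (n : ℕ) : n + 1 ≤ Sfn n := by
  induction n with
  | zero => decide
  | succ m ih => have := Sfn_lt_succ m; omega

lemma Sfn_13 (t : ℕ) : Sfn (t+4) + 1 ≤ 13 * Sfn t := by
  induction t using Nat.strong_induction_on with
  | _ t ih =>
    match t with
    | 0 => decide
    | 1 => decide
    | (m+2) =>
      have h1 := ih m (by omega)
      have h2 := ih (m+1) (by omega)
      have e1 : Sfn (m+6) = Sfn (m+5) + Sfn (m+4) := rfl
      have e2 : Sfn (m+2) = Sfn (m+1) + Sfn m := rfl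
      have e3 : Sfn (m+1+4) = Sfn (m+5) := rfl
      show Sfn (m+6) + 1 ≤ 13 * Sfn (m+2)
      omega

/-- Zeckendorf-type numbers: sums of Fibonacci numbers `Sfn j` with indices ≥ k,
peeled from the largest part, with the gap condition `m < Sfn (j-1)`. -/
inductive IsZ (k : ℕ) : ℕ → Prop
  | zero : IsZ k 0
  | step (j m : ℕ) : k ≤ j → m < Sfn (j-1) → IsZ k m → IsZ k (Sfn j + m)

lemma isZ_single {k j : ℕ} (hkj : k ≤ j) : IsZ k (Sfn j) := by
  have := IsZ.step (k := k) j 0 hkj (Sfn_pos _) IsZ.zero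
  simpa using this

/-- every `n` is within `Sfn k` of a Zeckendorf number with parts ≥ k. -/
lemma isZ_syndetic (k : ℕ) : ∀ n : ℕ, ∃ i, i ≤ Sfn k ∧ IsZ k (n + i) := by
  intro n
  induction n using Nat.strong_induction_on with
  | _ n ih =>
    rcases Nat.eq_zero_or_pos n with rfl | hn
    · exact ⟨0, Nat.zero_le _, IsZ.zero⟩
    by_cases hnk : n ≤ Sfn k
    · refine ⟨Sfn k - n, by omega, ?_⟩
      have : n + (Sfn k - n) = Sfn k := by omega
      rw [this]; exact isZ_single le_rfl
    · push_neg at hnk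
      -- largest j with Sfn j ≤ n
      set j := Nat.findGreatest (fun j => Sfn j ≤ n) n with hj
      have hkn : k ≤ n := le_trans (by have := Sfn_ge k; omega) (le_of_lt hnk)
      have hjk : k ≤ j := Nat.le_findGreatest hkn (le_of_lt hnk)
      have hjle : Sfn j ≤ n := by
        have := Nat.findGreatest_spec (P := fun j => Sfn j ≤ n) hkn (le_of_lt hnk)
        exact this
      have hjn : j < n := by
        have := Sfn_ge j; omega
      have hlt : n < Sfn (j+1) := by
        by_contra hcon
        push_neg at hcon
        have hj1n : j + 1 ≤ n := by have := Sfn_ge (j+1); omega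
        have := Nat.findGreatest_is_greatest (P := fun j => Sfn j ≤ n) (n := n)
          (k := j+1) (by omega) hj1n
        exact this hcon
      set m := n - Sfn j with hm
      have hmn : m < n := by have := Sfn_pos j; omega
      have hmlt : m < Sfn (j-1) := by
        have := Sfn_succ j; omega
      obtain ⟨i, hi, hiz⟩ := ih m hmn
      by_cases hcase : m + i < Sfn (j-1)
      · refine ⟨i, hi, ?_⟩
        have : n + i = Sfn j + (m + i) := by omega
        rw [this]
        exact IsZ.step j (m+i) hjk hcase hiz
      · -- overflow: jump to Sfn (j+1)
        refine ⟨Sfn (j+1) - n, ?_, ?_⟩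
        · have : Sfn (j+1) ≤ n + i := by
            have := Sfn_succ j; omega
          omega
        · have : n + (Sfn (j+1) - n) = Sfn (j+1) := by omega
          rw [this]; exact isZ_single (by omega)

lemma isZ_mono {k k' n : ℕ} (hk : k ≤ k') (hz : IsZ k' n) : IsZ k n := by
  induction hz with
  | zero => exact IsZ.zero
  | step j m hkj hlt _ ih => exact IsZ.step j m (le_trans hk hkj) hlt ih

lemma isZ_lt {k n : ℕ} (hz : IsZ k n) : ∀ j m, n = Sfn j + m → m < Sfn (j-1) → m < Sfn (j+1) - Sfn j := by
  intro j m _ hlt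
  have := Sfn_succ j
  omega

set_option maxHeartbeats 4000000 in
theorem positive_part_log_deriv_not_integrable
    (lam : ℝ) (hlam1 : 1 < lam) (hlam2 : lam ≤ 2)
    (T : ℝ → ℝ) (hT : ∀ x : ℝ, T x = lam * (1 - |x|) - 1)
    (c : ℕ → ℝ) (hc : ∀ i : ℕ, c i = T^[i] 0)
    (S : ℤ → ℕ) (hSm2 : S (-2) = 0) (hSm1 : S (-1) = 1)
    (hSrec : ∀ k : ℤ, 0 ≤ k → S k = S (k - 1) + S (k - 2))
    (hcne : ∀ j : ℕ, 1 ≤ j → c j ≠ 0)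
    (hc2neg : c 2 < 0) (hc1pos : 0 < c 1)
    (hsame : ∀ k : ℤ, 2 ≤ k → ∀ j : ℕ, 1 ≤ j → j < S (k - 2) →
      (0 < c (S (k - 1) + j) ↔ 0 < c j))
    (hopp : ∀ k : ℤ, 2 ≤ k → (0 < c (S k) ↔ c (S (k - 2)) < 0))
    (hdec : ∀ k : ℤ, 0 ≤ k → |c (S (k + 1))| < |c (S k)|)
    (hc34 : |c 3| < |c 4|)
    (h : ℝ → ℝ) (h' : ℝ → ℝ) (hinv : ℝ → ℝ)
    (hmono : StrictMonoOn h (Set.Icc (-1 : ℝ) 1))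
    (hbij : Set.BijOn h (Set.Icc (-1 : ℝ) 1) (Set.Icc (-1 : ℝ) 1))
    (hhd : ∀ x ∈ Set.Icc (-1 : ℝ) 1, HasDerivWithinAt h (h' x) (Set.Icc (-1 : ℝ) 1) x)
    (hC1 : ContinuousOn h' (Set.Icc (-1 : ℝ) 1))
    (hinvl : ∀ x ∈ Set.Icc (-1 : ℝ) 1, hinv (h x) = x)
    (hinvr : ∀ y ∈ Set.Icc (-1 : ℝ) 1, h (hinv y) = y)
    (h'ne : ∀ x ∈ Set.Icc (-1 : ℝ) 1, x ≠ 0 → h' x ≠ 0)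
    (h'0 : h' 0 = 0)
    (αp αm M δ : ℝ) (hαp : 0 < αp) (hαm : 0 < αm) (hM : 0 < M)
    (hδ : 0 < δ) (hδ1 : δ ≤ 1)
    (hnfp : ∀ x ∈ Set.Ioo (0 : ℝ) δ,
      Real.exp (-M) * x ^ αp ≤ h' x ∧ h' x ≤ Real.exp M * x ^ αp)
    (hnfm : ∀ x ∈ Set.Ioo (-δ) (0 : ℝ),
      Real.exp (-M) * |x| ^ αm ≤ h' x ∧ h' x ≤ Real.exp M * |x| ^ αm)
    (f : ℝ → ℝ) (hfdef : ∀ x : ℝ, f x = h (T (hinv x)))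
    (ct : ℝ) (hct : ct = h 0)
    (μP : MeasureTheory.Measure ℝ) [MeasureTheory.IsProbabilityMeasure μP]
    (hinvar : MeasureTheory.Measure.map T μP = μP)
    (hsupp : μP (closure {y : ℝ | ∃ n : ℕ, T^[n] 0 = y})ᶜ = 0)
    (hatom : μP {(0 : ℝ)} = 0) :
    ∫⁻ x, ENNReal.ofReal (max 0 (Real.log |deriv f x|)) ∂(MeasureTheory.Measure.map h μP) = ⊤ := by
  classical
  -- ## basic facts
  have hlam0 : (0:ℝ) < lam := lt_trans one_pos hlam1
  have hc0 : c 0 = 0 := by rw [hc]; rfl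
  have hcsucc : ∀ m : ℕ, c (m+1) = T (c m) := by
    intro m; rw [hc, hc, Function.iterate_succ_apply']
  have hc1 : c 1 = lam - 1 := by
    rw [hcsucc 0, hc0, hT]; simp
  -- ## translation of S to Sfn
  have hS0 : S 0 = 1 := by
    have h0 := hSrec 0 le_rfl
    rw [show (0:ℤ)-1 = -1 by norm_num, show (0:ℤ)-2 = -2 by norm_num, hSm1, hSm2] at h0
    omega
  have hS1 : S 1 = 2 := by
    have h1 := hSrec 1 (by norm_num)
    rw [show (1:ℤ)-1 = 0 by norm_num, show (1:ℤ)-2 = -1 by norm_num, hS0, hSm1] at h1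
    omega
  have hSZ : ∀ n : ℕ, S (n : ℤ) = Sfn n := by
    intro n
    induction n using Nat.strong_induction_on with
    | _ n ih =>
      match n with
      | 0 => simpa [Sfn] using hS0
      | 1 => simpa [Sfn] using hS1
      | (m+2) =>
        have hr := hSrec ((m:ℤ)+2) (by positivity)
        rw [show (m:ℤ)+2-1 = (m:ℤ)+1 by ring, show (m:ℤ)+2-2 = (m:ℤ) by ring] at hr
        have e1 : ((m+1:ℕ):ℤ) = (m:ℤ)+1 := by push_cast; ring
        have e2 : ((m+2:ℕ):ℤ) = (m:ℤ)+2 := by push_cast; ring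
        rw [e2, hr, ← e1, ih (m+1) (by omega), ih m (by omega)]
        exact (Sfn_add2 m).symm
  have hsameN : ∀ k : ℕ, 2 ≤ k → ∀ j : ℕ, 1 ≤ j → j < Sfn (k-2) →
      (0 < c (Sfn (k-1) + j) ↔ 0 < c j) := by
    intro k hk j hj hlt
    have e1 : ((k:ℤ) - 1) = ((k-1 : ℕ) : ℤ) := by omega
    have e2 : ((k:ℤ) - 2) = ((k-2 : ℕ) : ℤ) := by omega
    have := hsame (k:ℤ) (by exact_mod_cast hk) j hj (by rw [e2, hSZ]; exact hlt)
    rwa [e1, hSZ] at this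
  have hoppN : ∀ k : ℕ, 2 ≤ k → (0 < c (Sfn k) ↔ c (Sfn (k-2)) < 0) := by
    intro k hk
    have e2 : ((k:ℤ) - 2) = ((k-2 : ℕ) : ℤ) := by omega
    have := hopp (k:ℤ) (by exact_mod_cast hk)
    rwa [e2, hSZ, hSZ] at this
  set d : ℕ → ℝ := fun k => |c (Sfn k)| with hd
  have hdpos : ∀ k, 0 < d k := fun k => abs_pos.mpr (hcne _ (Sfn_pos k))
  have hdecN : ∀ k : ℕ, d (k+1) < d k := by
    intro k
    have := hdec (k:ℤ) (Int.natCast_nonneg k)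
    have e1 : (k:ℤ)+1 = ((k+1:ℕ):ℤ) := by push_cast; ring
    rw [e1, hSZ, hSZ] at this
    exact this
  have hdanti : ∀ a b : ℕ, a ≤ b → d b ≤ d a := by
    intro a b hab
    exact antitone_nat_of_succ_le (fun n => (hdecN n).le) hab
  -- ## orbit bounded
  have horb : ∀ n : ℕ, |c n| ≤ 1 := by
    intro n
    induction n with
    | zero => rw [hc0]; simp
    | succ m ihm =>
      rw [hcsucc, hT]
      have h1 : 0 ≤ |c m| := abs_nonneg _
      rw [abs_le]
      constructor <;> nlinarith
  have hd1 : ∀ k, d k ≤ 1 := fun k => horb _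
  -- ## same-side step identity
  have hTstep : ∀ x y : ℝ, (0 < x ↔ 0 < y) → x ≠ 0 → y ≠ 0 →
      |T x - T y| = lam * |x - y| := by
    intro x y hiff hx hy
    rw [hT, hT]
    rcases lt_trichotomy 0 x with hx1 | hx1 | hx1
    · have hy1 : 0 < y := hiff.1 hx1
      rw [abs_of_pos hx1, abs_of_pos hy1,
        show lam * (1 - x) - 1 - (lam * (1 - y) - 1) = -(lam * (x - y)) by ring,
        abs_neg, abs_mul, abs_of_pos hlam0]
    · exact absurd hx1.symm hx
    · have hy1 : y < 0 := by
        rcases lt_trichotomy 0 y with hy2 | hy2 | hy2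
        · exact absurd (hiff.2 hy2) (by linarith)
        · exact absurd hy2.symm hy
        · exact hy2
      rw [abs_of_neg hx1, abs_of_neg hy1,
        show lam * (1 - -x) - 1 - (lam * (1 - -y) - 1) = lam * (x - y) by ring,
        abs_mul, abs_of_pos hlam0]
  have hOS : ∀ m : ℕ, |c (m+1) - c 1| = lam * |c m| := by
    intro m
    rw [hcsucc m, hT, hc1,
      show lam * (1 - |c m|) - 1 - (lam - 1) = -(lam * |c m|) by ring,
      abs_neg, abs_mul, abs_of_pos hlam0, abs_abs]
  -- ## shadowing equality
  have hSH : ∀ j t : ℕ, 1 ≤ j → 1 ≤ t → t ≤ Sfn (j-1) →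
      |c (Sfn j + t) - c t| = lam ^ t * d j := by
    intro j t hj
    induction t with
    | zero => intro h1 _; omega
    | succ s ihs =>
      intro _ hle
      rcases Nat.eq_zero_or_pos s with rfl | hs
      · simpa [pow_one] using hOS (Sfn j)
      · have hlt : s < Sfn (j-1) := by omega
        have hprev := ihs hs (by omega)
        have e2 : j + 1 - 2 = j - 1 := by omega
        have e3 : j + 1 - 1 = j := by omega
        have hsg := hsameN (j+1) (by omega) s hs (by rw [e2]; exact hlt)
        rw [e3] at hsg
        have hne1 : c (Sfn j + s) ≠ 0 := hcne _ (by have := Sfn_pos j; omega)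
        have hne2 : c s ≠ 0 := hcne _ hs
        have hstep := hTstep _ _ hsg hne1 hne2
        have e1 : Sfn j + (s+1) = (Sfn j + s) + 1 := by omega
        rw [e1, hcsucc (Sfn j + s), hcsucc s, hstep, hprev]
        ring
  -- ## fundamental identity
  have hID : ∀ j : ℕ, d j + d (j+2) = lam ^ (Sfn j) * d (j+1) := by
    intro j
    have hsh := hSH (j+1) (Sfn j) (by omega) (Sfn_pos j)
      (by rw [show j+1-1 = j by omega])
    have e1 : Sfn (j+1) + Sfn j = Sfn (j+2) := (Sfn_add2 j).symm
    rw [e1] at hsh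
    have hop := hoppN (j+2) (by omega)
    rw [show j+2-2 = j by omega] at hop
    have hne1 : c (Sfn (j+2)) ≠ 0 := hcne _ (Sfn_pos _)
    have hne2 : c (Sfn j) ≠ 0 := hcne _ (Sfn_pos _)
    have hgoal : |c (Sfn j)| + |c (Sfn (j+2))| = lam ^ (Sfn j) * d (j+1) := by
      rw [← hsh]
      rcases lt_trichotomy 0 (c (Sfn (j+2))) with hp | hp | hp
      · have hn : c (Sfn j) < 0 := hop.1 hp
        rw [abs_of_neg hn, abs_of_pos hp, abs_of_pos (by linarith : (0:ℝ) < c (Sfn (j+2)) - c (Sfn j))]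
        ring
      · exact absurd hp.symm hne1
      · have hn : 0 < c (Sfn j) := by
          rcases lt_trichotomy 0 (c (Sfn j)) with hq | hq | hq
          · exact hq
          · exact absurd hq.symm hne2
          · exact absurd (hop.2 hq) (by linarith)
        rw [abs_of_pos hn, abs_of_neg hp, abs_of_neg (by linarith : c (Sfn (j+2)) - c (Sfn j) < 0)]
        ring
    exact hgoal
  -- ## threshold k₀
  obtain ⟨N₀, hN₀⟩ := pow_unbounded_of_one_lt (8:ℝ) hlam1
  set k₀ : ℕ := N₀ + 1 with hk₀
  have hk₀pow : ∀ j : ℕ, k₀ ≤ j → (8:ℝ) ≤ lam ^ (Sfn j) := by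
    intro j hj
    have h1 : N₀ ≤ Sfn j := by have := Sfn_ge j; omega
    calc (8:ℝ) ≤ lam ^ N₀ := hN₀.le
    _ ≤ lam ^ (Sfn j) := pow_le_pow_right₀ hlam1.le h1
  have hquart : ∀ j : ℕ, k₀ ≤ j → 4 * d (j+1) ≤ d j := by
    intro j hj
    have hid := hID j
    have h8 := hk₀pow j hj
    have h2 : d (j+2) ≤ d j := hdanti j (j+2) (by omega)
    nlinarith [hdpos (j+1), hdpos j]
  -- ## the key estimate
  have hEST : ∀ k, k₀ ≤ k → ∀ n j m : ℕ, k ≤ j → m < Sfn (j-1) → IsZ k m →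
      n = Sfn j + m → |c n| ≤ d k + 4 * d (k+1) - 3 * d (j+1) := by
    intro k hk n
    induction n using Nat.strong_induction_on with
    | _ n ih =>
      intro j m hkj hmlt hzm hn
      rcases Nat.eq_zero_or_pos m with rfl | hm
      · have hcd : |c n| = d j := by rw [hn, Nat.add_zero]
        rw [hcd]
        have h1 : d j ≤ d k := hdanti k j hkj
        have h2 : d (j+1) ≤ d (k+1) := hdanti (k+1) (j+1) (by omega)
        have h3 := hdpos (k+1)
        have h4 := hdpos (j+1)
        linarith
      · cases hzm with
        | zero => omega
        | step j₂ m₂ hkj₂ hm₂lt hzm₂ =>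
          have hSp2 := Sfn_pos j₂
          have hSpj := Sfn_pos j
          have hjj : j₂ + 2 ≤ j := by
            have h1 : Sfn j₂ < Sfn (j-1) := by omega
            have h2 : j₂ < j - 1 := by
              by_contra hcon
              push_neg at hcon
              exact absurd (Sfn_mono hcon) (by omega)
            omega
          have hmS : Sfn j₂ + m₂ < Sfn (j₂+1) := by
            have hs := Sfn_succ j₂
            omega
          have hIH := ih (Sfn j₂ + m₂) (by omega) j₂ m₂ hkj₂ hm₂lt hzm₂ rfl
          have hsh := hSH j (Sfn j₂ + m₂) (by omega) (by omega) (by omega)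
          rw [← hn] at hsh
          have hmono1 : (lam:ℝ) ^ (Sfn j₂ + m₂) ≤ lam ^ (Sfn (j₂+1)) :=
            pow_le_pow_right₀ hlam1.le (by omega)
          have hid2 := hID (j₂+1)
          rw [show j₂+1+2 = j₂+3 by omega, show j₂+1+1 = j₂+2 by omega] at hid2
          have hq2 : 4 * d (j₂+2) ≤ d (j₂+1) := hquart (j₂+1) (by omega)
          have hq3 : 4 * d (j₂+3) ≤ d (j₂+2) := hquart (j₂+2) (by omega)
          have hdjpos := hdpos j
          have hd1pos := hdpos (j₂+1)
          have hd2pos := hdpos (j₂+2)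
          have hd3pos := hdpos (j₂+3)
          have hE1 : lam ^ (Sfn j₂ + m₂) * d j ≤ lam ^ (Sfn (j₂+1)) * d j :=
            mul_le_mul_of_nonneg_right hmono1 hdjpos.le
          have herr : lam ^ (Sfn j₂ + m₂) * d j ≤ 3 * d (j₂+1) - 3 * d (j+1) := by
            rcases eq_or_lt_of_le hjj with heq | hlt2
            · -- j = j₂ + 2
              subst heq
              have hE2 : lam ^ (Sfn (j₂+1)) * d (j₂+2) = d (j₂+1) + d (j₂+3) := hid2.symm
              rw [show j₂+2+1 = j₂+3 by omega]
              linarith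
            · -- j ≥ j₂ + 3
              have hj3 : j₂ + 3 ≤ j := hlt2
              have hdj : d j ≤ d (j₂+3) := hdanti (j₂+3) j hj3
              have hdj1 : d (j+1) ≤ d (j₂+3) := hdanti (j₂+3) (j+1) (by omega)
              have hpow : (0:ℝ) ≤ lam ^ (Sfn (j₂+1)) := by positivity
              have hE2 : lam ^ (Sfn (j₂+1)) * d j ≤ lam ^ (Sfn (j₂+1)) * d (j₂+3) :=
                mul_le_mul_of_nonneg_left hdj hpow
              have hE3 : lam ^ (Sfn (j₂+1)) * (4 * d (j₂+3)) ≤ lam ^ (Sfn (j₂+1)) * d (j₂+2) :=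
                mul_le_mul_of_nonneg_left hq3 hpow
              have hE4 : lam ^ (Sfn (j₂+1)) * d (j₂+2) = d (j₂+1) + d (j₂+3) := hid2.symm
              -- λ^S d j ≤ (d(j₂+1)+d(j₂+3))/4
              linarith
          have htri : |c n| ≤ |c (Sfn j₂ + m₂)| + lam ^ (Sfn j₂ + m₂) * d j := by
            calc |c n| = |(c n - c (Sfn j₂ + m₂)) + c (Sfn j₂ + m₂)| := by ring_nf
            _ ≤ |c n - c (Sfn j₂ + m₂)| + |c (Sfn j₂ + m₂)| := abs_add_le _ _
            _ = lam ^ (Sfn j₂ + m₂) * d j + |c (Sfn j₂ + m₂)| := by rw [hsh]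
            _ = |c (Sfn j₂ + m₂)| + lam ^ (Sfn j₂ + m₂) * d j := by ring
          linarith
  have hVIS : ∀ k, k₀ ≤ k → ∀ z, IsZ (k+1) z → |c z| ≤ d k := by
    intro k hk z hz
    cases hz with
    | zero => rw [hc0]; simpa using (hdpos k).le
    | step j m hkj hmlt hzm =>
      have hest := hEST (k+1) (by omega) (Sfn j + m) j m hkj hmlt hzm rfl
      rw [show k+1+1 = k+2 by omega] at hest
      have hq1 : 4 * d (k+1) ≤ d k := hquart k hk
      have hq2 : 4 * d (k+2) ≤ d (k+1) := hquart (k+1) (by omega)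
      have := hdpos (j+1)
      have := hdpos (k+1)
      linarith
  have hCOMB : ∀ k, k₀ ≤ k → ∀ n : ℕ, ∃ i, i ≤ Sfn (k+1) ∧ |c (n+i)| ≤ d k := by
    intro k hk n
    obtain ⟨i, hi, hiz⟩ := isZ_syndetic (k+1) n
    exact ⟨i, hi, hVIS k hk _ hiz⟩
  -- ## T continuous and invariance of iterates
  have hTfun : T = fun x => lam * (1 - |x|) - 1 := funext hT
  have hTcont : Continuous T := by
    rw [hTfun]
    exact (continuous_const.mul (continuous_const.sub continuous_abs)).sub continuous_const
  have hitcont : ∀ i : ℕ, Continuous (T^[i]) := fun i => hTcont.iterate i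
  have hTmeas : Measurable T := hTcont.measurable
  have hitermap : ∀ i : ℕ, Measure.map (T^[i]) μP = μP := by
    intro i
    induction i with
    | zero => simp
    | succ n ihn =>
      rw [Function.iterate_succ, ← Measure.map_map (hitcont n).measurable hTmeas, hinvar, ihn]
  -- ## measure lower bound
  set Iset : ℕ → Set ℝ := fun k => Icc (-(d k)) (d k) with hIset
  have hMB : ∀ k, k₀ ≤ k → ((Sfn (k+1) + 1 : ℕ) : ℝ≥0∞)⁻¹ ≤ μP (Iset k) := by
    intro k hk
    have hR : True := trivial
    set G : Set ℝ := ⋃ i ∈ Finset.range (Sfn (k+1) + 1), (T^[i]) ⁻¹' (Iset k) with hG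
    have hIcl : IsClosed (Iset k) := isClosed_Icc
    have hGcl : IsClosed G := by
      rw [hG]
      exact Set.Finite.isClosed_biUnion (Finset.range (Sfn (k+1) + 1)).finite_toSet
        (fun i _ => hIcl.preimage (hitcont i))
    have horbG : {y : ℝ | ∃ n : ℕ, T^[n] 0 = y} ⊆ G := by
      rintro y ⟨n, rfl⟩
      obtain ⟨i, hi, hci⟩ := hCOMB k hk n
      have hiR : i ∈ Finset.range (Sfn (k+1) + 1) := Finset.mem_range.2 (Nat.lt_succ_of_le hi)
      refine Set.mem_biUnion hiR ?_
      show T^[i] (T^[n] 0) ∈ Iset k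
      have he : T^[i] (T^[n] 0) = c (n + i) := by
        rw [hc, ← Function.iterate_add_apply, Nat.add_comm]
      rw [he]
      have := abs_le.1 hci
      exact ⟨this.1, this.2⟩
    have hclG : closure {y : ℝ | ∃ n : ℕ, T^[n] 0 = y} ⊆ G := closure_minimal horbG hGcl
    have h1 : (1:ℝ≥0∞) ≤ μP G := by
      have hmc := measure_add_measure_compl (μ := μP)
        (isClosed_closure (s := {y : ℝ | ∃ n : ℕ, T^[n] 0 = y})).measurableSet
      rw [hsupp, measure_univ, add_zero] at hmc
      calc (1:ℝ≥0∞) = μP (closure {y : ℝ | ∃ n : ℕ, T^[n] 0 = y}) := hmc.symm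
      _ ≤ μP G := measure_mono hclG
    have h2 : μP G ≤ ((Sfn (k+1) + 1 : ℕ) : ℝ≥0∞) * μP (Iset k) := by
      rw [hG]
      refine le_trans (measure_biUnion_finset_le _ _) ?_
      have hcongr : ∀ i ∈ Finset.range (Sfn (k+1) + 1), μP ((T^[i])⁻¹' (Iset k)) = μP (Iset k) := by
        intro i _
        conv_rhs => rw [← hitermap i]
        rw [Measure.map_apply (hitcont i).measurable hIcl.measurableSet]
      rw [Finset.sum_congr rfl hcongr, Finset.sum_const, Finset.card_range, nsmul_eq_mul]
    have hRne : ((Sfn (k+1) + 1 : ℕ):ℝ≥0∞) ≠ 0 :=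
      Nat.cast_ne_zero.2 (by omega)
    have hRtop : ((Sfn (k+1) + 1 : ℕ):ℝ≥0∞) ≠ ⊤ := ENNReal.natCast_ne_top _
    calc ((Sfn (k+1) + 1 : ℕ):ℝ≥0∞)⁻¹ = ((Sfn (k+1) + 1 : ℕ):ℝ≥0∞)⁻¹ * 1 := (mul_one _).symm
    _ ≤ ((Sfn (k+1) + 1 : ℕ):ℝ≥0∞)⁻¹ * (((Sfn (k+1) + 1 : ℕ):ℝ≥0∞) * μP (Iset k)) :=
      mul_le_mul_right (le_trans h1 h2) _
    _ = (((Sfn (k+1) + 1 : ℕ):ℝ≥0∞)⁻¹ * ((Sfn (k+1) + 1 : ℕ):ℝ≥0∞)) * μP (Iset k) := (mul_assoc _ _ _).symm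
    _ = μP (Iset k) := by rw [ENNReal.inv_mul_cancel hRne hRtop, one_mul]
  -- ## analytic lower bound on the derivative near the critical point
  set ε₀ : ℝ := min δ ((lam - 1)/(2*lam)) with hε₀
  have hε₀pos : 0 < ε₀ := lt_min hδ (div_pos (by linarith) (by linarith))
  set A : Set ℝ := Icc (lam - 1 - lam * ε₀) (lam - 1) with hA
  have hApos : ∀ x ∈ A, 0 < x := by
    intro x hx
    have h1 : lam * ε₀ ≤ lam * ((lam - 1)/(2*lam)) :=
      mul_le_mul_of_nonneg_left (min_le_right _ _) hlam0.le
    have h2 : lam * ((lam - 1)/(2*lam)) = (lam - 1)/2 := by field_simp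
    have h3 : lam - 1 - lam * ε₀ ≤ x := hx.1
    linarith
  have hAsub : A ⊆ Icc (-1:ℝ) 1 := by
    intro x hx
    constructor
    · linarith [hApos x hx]
    · have h2 : x ≤ lam - 1 := hx.2
      linarith
  obtain ⟨m₀, hm₀pos, hm₀le⟩ :
      ∃ m₀ : ℝ, 0 < m₀ ∧ ∀ x ∈ A, m₀ ≤ |h' x| := by
    have hAne : A.Nonempty := by
      refine ⟨lam - 1, ?_, le_rfl⟩
      nlinarith [hε₀pos]
    have hAcomp : IsCompact A := isCompact_Icc
    have hcont : ContinuousOn (fun x => |h' x|) A := (hC1.mono hAsub).abs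
    obtain ⟨x₀, hx₀A, hx₀min⟩ := hAcomp.exists_isMinOn hAne hcont
    refine ⟨|h' x₀|, ?_, fun x hx => hx₀min hx⟩
    exact abs_pos.2 (h'ne x₀ (hAsub hx₀A) (ne_of_gt (hApos _ hx₀A)))
  set αmin : ℝ := min αp αm with hαmin
  have hαminpos : 0 < αmin := lt_min hαp hαm
  set C₀ : ℝ := -(Real.log (m₀ * lam * Real.exp (-M))) with hC₀
  -- endpoints of h
  have hm1I : (-1:ℝ) ∈ Icc (-1:ℝ) 1 := by norm_num
  have hp1I : (1:ℝ) ∈ Icc (-1:ℝ) 1 := by norm_num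
  have hm1 : h (-1) = -1 := by
    have hle : -1 ≤ h (-1) := (hbij.mapsTo hm1I).1
    obtain ⟨x, hx, hhx⟩ := hbij.surjOn hm1I
    have h1 : h (-1) ≤ h x := by
      rcases eq_or_lt_of_le hx.1 with heq | hlt
      · rw [← heq]
      · exact (hmono hm1I hx hlt).le
    rw [hhx] at h1
    linarith
  have hp1 : h 1 = 1 := by
    have hle : h 1 ≤ 1 := (hbij.mapsTo hp1I).2
    obtain ⟨x, hx, hhx⟩ := hbij.surjOn hp1I
    have h1 : h x ≤ h 1 := by
      rcases eq_or_lt_of_le hx.2 with heq | hlt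
      · rw [heq]
      · exact (hmono hx hp1I hlt).le
    rw [hhx] at h1
    linarith
  have hinvmem : ∀ a ∈ Icc (-1:ℝ) 1, hinv a ∈ Icc (-1:ℝ) 1 := by
    intro a ha
    obtain ⟨x, hx, hhx⟩ := hbij.surjOn ha
    rw [← hhx, hinvl x hx]
    exact hx
  have hANA : ∀ y : ℝ, y ≠ 0 → |y| < ε₀ →
      αmin * (-Real.log |y|) - C₀ ≤ Real.log |deriv f (h y)| := by
    intro y hy0 hyε
    have hyδ : |y| < δ := lt_of_lt_of_le hyε (min_le_left _ _)
    have hy1 : |y| < 1 := lt_of_lt_of_le hyδ hδ1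
    have hyabs : 0 < |y| := abs_pos.2 hy0
    have hyo := abs_lt.1 hy1
    have hyI : y ∈ Icc (-1:ℝ) 1 := ⟨hyo.1.le, hyo.2.le⟩
    have hhyo : h y ∈ Ioo (-1:ℝ) 1 := by
      constructor
      · rw [← hm1]; exact hmono hm1I hyI hyo.1
      · rw [← hp1]; exact hmono hyI hp1I hyo.2
    -- bounds on h' y
    have hαm1 : αmin ≤ αp := min_le_left _ _
    have hαm2 : αmin ≤ αm := min_le_right _ _
    have hbnd : 0 < h' y ∧ h' y ≤ Real.exp M * |y| ^ αmin := by
      rcases lt_or_gt_of_ne hy0 with hneg | hpos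
      · have hyδ' := abs_lt.1 hyδ
        have hb := hnfm y ⟨hyδ'.1, hneg⟩
        have hr : |y| ^ αm ≤ |y| ^ αmin :=
          Real.rpow_le_rpow_of_exponent_ge hyabs hy1.le hαm2
        refine ⟨lt_of_lt_of_le ?_ hb.1, le_trans hb.2 ?_⟩
        · positivity
        · exact mul_le_mul_of_nonneg_left hr (Real.exp_pos M).le
      · have hyδ' : y < δ := by rwa [abs_of_pos hpos] at hyδ
        have hb := hnfp y ⟨hpos, hyδ'⟩
        have hyy : |y| = y := abs_of_pos hpos
        have hr : y ^ αp ≤ y ^ αmin :=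
          Real.rpow_le_rpow_of_exponent_ge hpos (by rw [← hyy]; exact hy1.le) hαm1
        refine ⟨lt_of_lt_of_le ?_ hb.1, le_trans hb.2 ?_⟩
        · positivity
        · rw [hyy]
          exact mul_le_mul_of_nonneg_left hr (Real.exp_pos M).le
    obtain ⟨hlb, hub⟩ := hbnd
    -- the point T y
    have hTy : T y = lam - 1 - lam * |y| := by rw [hT]; ring
    have hTyA : T y ∈ A := by
      rw [hA, Set.mem_Icc, hTy]
      constructor
      · linarith [mul_le_mul_of_nonneg_left hyε.le hlam0.le]
      · linarith [mul_nonneg hlam0.le (abs_nonneg y)]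
    have hTypos : 0 < T y := hApos _ hTyA
    have hTylt : T y < 1 := by
      rw [hTy]
      linarith [mul_pos hlam0 hyabs]
    have hTyI : T y ∈ Icc (-1:ℝ) 1 := ⟨by linarith, hTylt.le⟩
    -- derivatives of h
    have hdy : HasDerivAt h (h' y) y :=
      (hhd y hyI).hasDerivAt (Icc_mem_nhds hyo.1 hyo.2)
    have hdTy : HasDerivAt h (h' (T y)) (T y) :=
      (hhd _ hTyI).hasDerivAt (Icc_mem_nhds (by linarith) hTylt)
    -- continuity of hinv at h y
    have hinvcont : ContinuousAt hinv (h y) := by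
      rw [Metric.continuousAt_iff]
      intro ε hε
      set l := max (y - ε/2) ((-1 + y)/2) with hldef
      set u := min (y + ε/2) ((1 + y)/2) with hudef
      have hl1 : -1 < l := lt_of_lt_of_le (by linarith [hyo.1]) (le_max_right _ _)
      have hly : l < y := max_lt (by linarith) (by linarith [hyo.1])
      have hyu : y < u := lt_min (by linarith) (by linarith [hyo.2])
      have hu1 : u < 1 := lt_of_le_of_lt (min_le_right _ _) (by linarith [hyo.2])
      have hlI : l ∈ Icc (-1:ℝ) 1 := ⟨hl1.le, by linarith⟩
      have huI : u ∈ Icc (-1:ℝ) 1 := ⟨by linarith, hu1.le⟩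
      have hhl : h l < h y := hmono hlI hyI hly
      have hhu : h y < h u := hmono hyI huI hyu
      refine ⟨min (h y - h l) (h u - h y), lt_min (by linarith) (by linarith), ?_⟩
      intro z hz
      rw [Real.dist_eq] at hz
      have hz' := abs_lt.1 hz
      have hz1 : h l < z := by
        have h3 := min_le_left (h y - h l) (h u - h y)
        linarith [hz'.1]
      have hz2 : z < h u := by
        have h3 := min_le_right (h y - h l) (h u - h y)
        linarith [hz'.2]
      have hzI : z ∈ Icc (-1:ℝ) 1 := by
        have ha := (hbij.mapsTo hlI).1
        have hb := (hbij.mapsTo huI).2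
        exact ⟨by linarith, by linarith⟩
      have hl2 : l < hinv z := by
        by_contra hcon
        push_neg at hcon
        have h1 : h (hinv z) ≤ h l := by
          rcases eq_or_lt_of_le hcon with heq | hlt
          · rw [heq]
          · exact (hmono (hinvmem z hzI) hlI hlt).le
        rw [hinvr z hzI] at h1
        linarith
      have hu2 : hinv z < u := by
        by_contra hcon
        push_neg at hcon
        have h1 : h u ≤ h (hinv z) := by
          rcases eq_or_lt_of_le hcon with heq | hlt
          · rw [heq]
          · exact (hmono huI (hinvmem z hzI) hlt).le
        rw [hinvr z hzI] at h1
        linarith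
      rw [Real.dist_eq, hinvl y hyI, abs_lt]
      constructor
      · have h3 := le_max_left (y - ε/2) ((-1 + y)/2)
        linarith
      · have h3 := min_le_left (y + ε/2) ((1 + y)/2)
        linarith
    -- inverse function derivative
    have hinvy : hinv (h y) = y := hinvl y hyI
    have h'yne : h' y ≠ 0 := ne_of_gt hlb
    have hfg : ∀ᶠ z in 𝓝 (h y), h (hinv z) = z := by
      filter_upwards [Icc_mem_nhds hhyo.1 hhyo.2] with z hz using hinvr z hz
    have hdinv : HasDerivAt hinv (h' y)⁻¹ (h y) :=
      HasDerivAt.of_local_left_inverse hinvcont (by rw [hinvy]; exact hdy) h'yne hfg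
    -- derivative of T at y
    have hdT : HasDerivAt T (if 0 < y then -lam else lam) y := by
      rcases lt_or_gt_of_ne hy0 with hneg | hpos
      · have heq : (fun x : ℝ => lam * (1 + x) - 1) =ᶠ[𝓝 y] T := by
          filter_upwards [Iio_mem_nhds hneg] with x hx
          rw [hT, abs_of_neg hx]
          ring
        have hlin : HasDerivAt (fun x : ℝ => lam * (1 + x) - 1) lam y := by
          simpa using (((hasDerivAt_id y).const_add (1:ℝ)).const_mul lam).sub_const 1
        rw [if_neg (by linarith)]
        exact hlin.congr_of_eventuallyEq heq.symm
      · have heq : (fun x : ℝ => lam * (1 - x) - 1) =ᶠ[𝓝 y] T := by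
          filter_upwards [Ioi_mem_nhds hpos] with x hx
          rw [hT, abs_of_pos hx]
        have hlin : HasDerivAt (fun x : ℝ => lam * (1 - x) - 1) (-lam) y := by
          simpa using (((hasDerivAt_id y).const_sub (1:ℝ)).const_mul lam).sub_const 1
        rw [if_pos hpos]
        exact hlin.congr_of_eventuallyEq heq.symm
    -- chain rule
    have hcomp1 : HasDerivAt (fun z => T (hinv z))
        ((if 0 < y then -lam else lam) * (h' y)⁻¹) (h y) :=
      HasDerivAt.comp (h y) (by rw [hinvy]; exact hdT) hdinv
    have hcomp2 : HasDerivAt (fun z => h (T (hinv z)))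
        (h' (T y) * ((if 0 < y then -lam else lam) * (h' y)⁻¹)) (h y) :=
      HasDerivAt.comp (h y) (by rw [hinvy]; exact hdTy) hcomp1
    have hfeq : f = fun z => h (T (hinv z)) := funext hfdef
    have hder : deriv f (h y) = h' (T y) * ((if 0 < y then -lam else lam) * (h' y)⁻¹) := by
      rw [hfeq]
      exact hcomp2.deriv
    have habs : |deriv f (h y)| = |h' (T y)| * (lam * (h' y)⁻¹) := by
      rw [hder, abs_mul, abs_mul, abs_inv, abs_of_pos hlb]
      congr 2
      split_ifs
      · rw [abs_neg, abs_of_pos hlam0]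
      · exact abs_of_pos hlam0
    -- lower bound on |deriv f (h y)|
    have hrwinv : (Real.exp M * |y| ^ αmin)⁻¹ = Real.exp (-M) * |y| ^ (-αmin) := by
      rw [mul_inv, Real.exp_neg, Real.rpow_neg (abs_nonneg y)]
    have h2 : (Real.exp M * |y| ^ αmin)⁻¹ ≤ (h' y)⁻¹ := by
      apply inv_anti₀ hlb hub
    have h3 : lam * (Real.exp M * |y| ^ αmin)⁻¹ ≤ lam * (h' y)⁻¹ :=
      mul_le_mul_of_nonneg_left h2 hlam0.le
    have h4 : m₀ * (lam * (Real.exp M * |y| ^ αmin)⁻¹) ≤ |h' (T y)| * (lam * (h' y)⁻¹) := by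
      apply mul_le_mul (hm₀le _ hTyA) h3 ?_ (abs_nonneg _)
      have : (0:ℝ) < Real.exp M * |y| ^ αmin := by
        have := Real.rpow_pos_of_pos hyabs αmin
        positivity
      positivity
    have hlow : (m₀ * lam * Real.exp (-M)) * |y| ^ (-αmin) ≤ |deriv f (h y)| := by
      rw [habs]
      calc (m₀ * lam * Real.exp (-M)) * |y| ^ (-αmin)
          = m₀ * (lam * (Real.exp (-M) * |y| ^ (-αmin))) := by ring
      _ = m₀ * (lam * (Real.exp M * |y| ^ αmin)⁻¹) := by rw [hrwinv]
      _ ≤ |h' (T y)| * (lam * (h' y)⁻¹) := h4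
    have hrppos : (0:ℝ) < |y| ^ (-αmin) := Real.rpow_pos_of_pos hyabs _
    have hBpos : (0:ℝ) < (m₀ * lam * Real.exp (-M)) * |y| ^ (-αmin) := by positivity
    have hloggoal := Real.log_le_log hBpos hlow
    rw [Real.log_mul (by positivity) (ne_of_gt hrppos),
      Real.log_rpow hyabs] at hloggoal
    rw [hC₀]
    linarith
  -- ## logarithmic size of d
  have hLOG : ∀ m : ℕ, 1 ≤ m →
      Real.log (d m) ≤ Real.log 2 - (Sfn (m-1) : ℝ) * Real.log lam := by
    intro m hm
    have hid := hID (m-1)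
    rw [show m-1+2 = m+1 by omega, show m-1+1 = m by omega] at hid
    have h2 : d (m-1) ≤ 1 := hd1 _
    have h3 : d (m+1) ≤ 1 := hd1 _
    have hpow : (0:ℝ) < lam ^ (Sfn (m-1)) := by positivity
    have h4 : d m ≤ 2 / lam ^ (Sfn (m-1)) := by
      rw [le_div_iff₀ hpow]
      nlinarith [hdpos (m+1), hdpos (m-1)]
    have h5 := Real.log_le_log (hdpos m) h4
    rw [Real.log_div (by norm_num) (ne_of_gt hpow), Real.log_pow] at h5
    exact h5
  -- ## the layered lower bound
  set A₁ : ℝ := αmin * Real.log lam with hA₁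
  have hlamlog : 0 < Real.log lam := Real.log_pos hlam1
  have hA₁pos : 0 < A₁ := mul_pos hαminpos hlamlog
  set L : ℕ → ℝ := fun m => αmin * ((Sfn (m-1) : ℝ) * Real.log lam - Real.log 2) - C₀ with hL
  set ee : ℕ → ℝ := fun m => A₁ * (Sfn (m-3) : ℝ) with hee
  have heepos : ∀ m, 0 < ee m := by
    intro m
    exact mul_pos hA₁pos (by exact_mod_cast Sfn_pos _)
  have hLstep : ∀ m : ℕ, 3 ≤ m → L m = L (m-1) + ee m := by
    intro m hm
    have hs := Sfn_succ (m-2)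
    rw [show m-2+1 = m-1 by omega, show m-2-1 = m-3 by omega] at hs
    have hcast : (Sfn (m-1) : ℝ) = (Sfn (m-2) : ℝ) + (Sfn (m-3) : ℝ) := by exact_mod_cast hs
    simp only [hL, hee, hA₁]
    rw [show m-1-1 = m-2 by omega, hcast]
    ring
  -- ## choice of k₀'
  obtain ⟨s₁, hs₁⟩ : ∃ s₁ : ℕ, ((1:ℝ)/4) ^ s₁ < ε₀ :=
    exists_pow_lt_of_lt_one hε₀pos (by norm_num)
  obtain ⟨t₁, ht₁⟩ := exists_nat_gt ((C₀ + αmin * Real.log 2) / A₁)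
  obtain ⟨k₀', hk₀'1, hk₀'2, hk₀'3, hk₀'4, hk₀'5⟩ :
      ∃ k₀' : ℕ, k₀ + 1 ≤ k₀' ∧ 6 ≤ k₀' ∧ d k₀' < ε₀ ∧ 0 ≤ L (k₀' - 1) ∧ 3 ≤ k₀' := by
    refine ⟨k₀ + s₁ + t₁ + 7, by omega, by omega, ?_, ?_, by omega⟩
    · have hq : ∀ u : ℕ, d (k₀ + u) ≤ d k₀ * (1/4)^u := by
        intro u
        induction u with
        | zero => simp
        | succ v ihv =>
          have hqv := hquart (k₀ + v) (by omega)
          have h4 : (0:ℝ) < (1/4:ℝ)^v := by positivity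
          have he : k₀ + (v+1) = (k₀+v)+1 := by omega
          rw [he, pow_succ]
          nlinarith [hdpos ((k₀+v)+1)]
      have h1 : d (k₀ + s₁ + t₁ + 7) ≤ d (k₀ + s₁) := hdanti _ _ (by omega)
      have h2 : d (k₀ + s₁) ≤ d k₀ * (1/4)^s₁ := hq s₁
      have h3 : d k₀ ≤ 1 := hd1 _
      have h4 : d k₀ * (1/4)^s₁ ≤ (1/4)^s₁ := by
        nlinarith [pow_pos (by norm_num : (0:ℝ) < 1/4) s₁, hdpos k₀]
      linarith
    · set m := k₀ + s₁ + t₁ + 7 - 1 with hmdef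
      have hm3 : 3 ≤ m := by omega
      have htS : (t₁:ℝ) ≤ (Sfn (m-1) : ℝ) := by
        have h1 : t₁ ≤ m - 1 := by omega
        have h2 : m - 1 + 1 ≤ Sfn (m-1) := Sfn_ge (m-1)
        exact_mod_cast by omega
      have ht₂ : C₀ + αmin * Real.log 2 < A₁ * t₁ := by
        have := (div_lt_iff₀ hA₁pos).1 ht₁
        linarith
      have hform : L m = A₁ * (Sfn (m-1):ℝ) - (C₀ + αmin * Real.log 2) := by
        simp only [hL, hA₁]
        ring
      rw [hform]
      have h5 : A₁ * (t₁:ℝ) ≤ A₁ * (Sfn (m-1):ℝ) := mul_le_mul_of_nonneg_left htS hA₁pos.le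
      linarith
  -- key pointwise bound
  have hKEY : ∀ m : ℕ, k₀' ≤ m → ∀ y : ℝ, y ≠ 0 → y ∈ Iset m →
      L m ≤ Real.log |deriv f (h y)| := by
    intro m hm y hy0 hyI
    have hym : |y| ≤ d m := abs_le.2 ⟨hyI.1, hyI.2⟩
    have hyε : |y| < ε₀ := lt_of_le_of_lt (le_trans hym (hdanti k₀' m hm)) hk₀'3
    have hana := hANA y hy0 hyε
    have hm1 : 1 ≤ m := by omega
    have hlog1 : Real.log |y| ≤ Real.log (d m) := Real.log_le_log (abs_pos.2 hy0) hym
    have hlog2 := hLOG m hm1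
    simp only [hL]
    have h5 : (Sfn (m-1):ℝ) * Real.log lam - Real.log 2 ≤ -Real.log |y| := by linarith
    have h6 : αmin * ((Sfn (m-1):ℝ) * Real.log lam - Real.log 2) ≤ αmin * (-Real.log |y|) :=
      mul_le_mul_of_nonneg_left h5 hαminpos.le
    linarith
  -- telescoping
  have hTEL : ∀ K : ℕ, k₀' - 1 ≤ K → ∑ k ∈ Finset.Icc k₀' K, ee k = L K - L (k₀' - 1) := by
    intro K hK
    induction K, hK using Nat.le_induction with
    | base =>
      rw [Finset.Icc_eq_empty (by omega), Finset.sum_empty]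
      ring
    | succ K hK ihK =>
      rw [Finset.sum_Icc_succ_top (by omega : k₀' ≤ K + 1), ihK]
      have hstep := hLstep (K+1) (by omega)
      rw [show K+1-1 = K by omega] at hstep
      linarith
  -- pointwise domination
  have hPC : ∀ K : ℕ, ∀ y : ℝ, y ≠ 0 →
      ∑ k ∈ Finset.Icc k₀' K, Set.indicator (Iset k) (fun _ => ENNReal.ofReal (ee k)) y
        ≤ ENNReal.ofReal (max 0 (Real.log |deriv f (h y)|)) := by
    intro K y hy0
    induction K with
    | zero =>
      rw [Finset.Icc_eq_empty (by omega), Finset.sum_empty]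
      exact zero_le
    | succ K ihK =>
      by_cases hKk : k₀' ≤ K + 1
      · by_cases hyK : y ∈ Iset (K+1)
        · have hall : ∀ k ∈ Finset.Icc k₀' (K+1),
              Set.indicator (Iset k) (fun _ => ENNReal.ofReal (ee k)) y = ENNReal.ofReal (ee k) := by
            intro k hk'
            have hk'' := Finset.mem_Icc.1 hk'
            have hdm : d (K+1) ≤ d k := hdanti k (K+1) hk''.2
            have hsub : y ∈ Iset k := ⟨by linarith [hyK.1], by linarith [hyK.2]⟩
            rw [Set.indicator_of_mem hsub]
          rw [Finset.sum_congr rfl hall,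
            ← ENNReal.ofReal_sum_of_nonneg (fun k _ => (heepos k).le),
            hTEL (K+1) (by omega)]
          apply ENNReal.ofReal_le_ofReal
          have hkey := hKEY (K+1) hKk y hy0 hyK
          have hmax := le_max_right (0:ℝ) (Real.log |deriv f (h y)|)
          rcases le_or_gt (Real.log |deriv f (h y)|) 0 with hcase | hcase
          · rw [max_eq_left hcase]
            linarith
          · rw [max_eq_right hcase.le]
            linarith
        · rw [Finset.sum_Icc_succ_top hKk, Set.indicator_of_notMem hyK, add_zero]
          exact ihK
      · push_neg at hKk
        rw [Finset.Icc_eq_empty (by omega), Finset.sum_empty]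
        exact zero_le
  -- ## change of variables
  have hGmeas : Measurable (fun x : ℝ => ENNReal.ofReal (max 0 (Real.log |deriv f x|))) := by
    have h1 : Measurable (deriv f) := measurable_deriv f
    exact (measurable_const.max (Real.measurable_log.comp h1.abs)).ennreal_ofReal
  have hhAE : AEMeasurable h μP := by
    have hcont : ContinuousOn h (Icc (-1:ℝ) 1) := fun x hx => (hhd x hx).continuousWithinAt
    have h1 : AEMeasurable h (μP.restrict (Icc (-1:ℝ) 1)) :=
      hcont.aemeasurable measurableSet_Icc
    have horbIcc : {y : ℝ | ∃ n : ℕ, T^[n] 0 = y} ⊆ Icc (-1:ℝ) 1 := by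
      rintro y ⟨n, rfl⟩
      have h2 : |T^[n] (0:ℝ)| ≤ 1 := by rw [← hc]; exact horb n
      exact abs_le.1 h2
    have hclIcc : closure {y : ℝ | ∃ n : ℕ, T^[n] 0 = y} ⊆ Icc (-1:ℝ) 1 :=
      closure_minimal horbIcc isClosed_Icc
    have hae : ∀ᵐ x ∂μP, x ∈ Icc (-1:ℝ) 1 := by
      rw [ae_iff]
      apply measure_mono_null ?_ hsupp
      intro x hx
      exact fun hcl => hx (hclIcc hcl)
    have h2 : μP.restrict (Icc (-1:ℝ) 1) = μP := Measure.restrict_eq_self_of_ae_mem hae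
    rwa [h2] at h1
  have hstep1 : ∫⁻ x, ENNReal.ofReal (max 0 (Real.log |deriv f x|)) ∂(Measure.map h μP)
      = ∫⁻ y, ENNReal.ofReal (max 0 (Real.log |deriv f (h y)|)) ∂μP :=
    lintegral_map' hGmeas.aemeasurable hhAE
  -- ## lower bound for each K
  have hstep2 : ∀ N : ℕ, (N : ℝ≥0∞) * ENNReal.ofReal (A₁ / 13)
      ≤ ∫⁻ y, ENNReal.ofReal (max 0 (Real.log |deriv f (h y)|)) ∂μP := by
    intro N
    set K := k₀' + N with hKdef
    have hae0 : ∀ᵐ y ∂μP, y ≠ (0:ℝ) := by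
      rw [ae_iff]
      simpa [Set.setOf_eq_eq_singleton] using hatom
    have hmono2 : ∫⁻ y, (∑ k ∈ Finset.Icc k₀' K,
          Set.indicator (Iset k) (fun _ => ENNReal.ofReal (ee k)) y) ∂μP
        ≤ ∫⁻ y, ENNReal.ofReal (max 0 (Real.log |deriv f (h y)|)) ∂μP := by
      apply lintegral_mono_ae
      filter_upwards [hae0] with y hy using hPC K y hy
    have hsum : ∫⁻ y, (∑ k ∈ Finset.Icc k₀' K,
          Set.indicator (Iset k) (fun _ => ENNReal.ofReal (ee k)) y) ∂μP
        = ∑ k ∈ Finset.Icc k₀' K, ENNReal.ofReal (ee k) * μP (Iset k) := by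
      rw [lintegral_finset_sum _ (fun k _ => measurable_const.indicator measurableSet_Icc)]
      refine Finset.sum_congr rfl fun k _ => ?_
      rw [lintegral_indicator measurableSet_Icc, setLIntegral_const]
    have hterm : ∀ k ∈ Finset.Icc k₀' K,
        ENNReal.ofReal (A₁/13) ≤ ENNReal.ofReal (ee k) * μP (Iset k) := by
      intro k hk'
      have hk'' := (Finset.mem_Icc.1 hk').1
      have hkk₀ : k₀ ≤ k := by omega
      have hμ := hMB k hkk₀
      have h13 : Sfn (k+1) + 1 ≤ 13 * Sfn (k-3) := by
        have h14 := Sfn_13 (k-3)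
        rw [show k-3+4 = k+1 by omega] at h14
        exact h14
      have hreal : (A₁/13) * ((Sfn (k+1) + 1 : ℕ):ℝ) ≤ ee k := by
        simp only [hee]
        have hc13 : ((Sfn (k+1) + 1 : ℕ):ℝ) ≤ 13 * (Sfn (k-3):ℝ) := by exact_mod_cast h13
        calc (A₁/13) * ((Sfn (k+1) + 1 : ℕ):ℝ)
            ≤ (A₁/13) * (13 * (Sfn (k-3):ℝ)) :=
              mul_le_mul_of_nonneg_left hc13 (by positivity)
        _ = A₁ * (Sfn (k-3):ℝ) := by ring
      have hnne : ((Sfn (k+1) + 1 : ℕ):ℝ≥0∞) ≠ 0 := Nat.cast_ne_zero.2 (by omega)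
      have hntop : ((Sfn (k+1) + 1 : ℕ):ℝ≥0∞) ≠ ⊤ := ENNReal.natCast_ne_top _
      have hmulle : ENNReal.ofReal (A₁/13) * ((Sfn (k+1) + 1 : ℕ):ℝ≥0∞) ≤ ENNReal.ofReal (ee k) := by
        rw [← ENNReal.ofReal_natCast (Sfn (k+1) + 1),
          ← ENNReal.ofReal_mul (by positivity)]
        exact ENNReal.ofReal_le_ofReal (by exact_mod_cast hreal)
      calc ENNReal.ofReal (A₁/13)
          = ENNReal.ofReal (A₁/13) * (((Sfn (k+1) + 1 : ℕ):ℝ≥0∞) * ((Sfn (k+1) + 1 : ℕ):ℝ≥0∞)⁻¹) := by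
            rw [ENNReal.mul_inv_cancel hnne hntop, mul_one]
      _ = (ENNReal.ofReal (A₁/13) * ((Sfn (k+1) + 1 : ℕ):ℝ≥0∞)) * ((Sfn (k+1) + 1 : ℕ):ℝ≥0∞)⁻¹ :=
            (mul_assoc _ _ _).symm
      _ ≤ ENNReal.ofReal (ee k) * μP (Iset k) := mul_le_mul' hmulle hμ
    have hcard : N ≤ (Finset.Icc k₀' K).card := by
      rw [Nat.card_Icc]
      omega
    have hsumge : (N:ℝ≥0∞) * ENNReal.ofReal (A₁/13)
        ≤ ∑ k ∈ Finset.Icc k₀' K, ENNReal.ofReal (ee k) * μP (Iset k) := by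
      have h1 : ((Finset.Icc k₀' K).card : ℝ≥0∞) * ENNReal.ofReal (A₁/13)
          ≤ ∑ k ∈ Finset.Icc k₀' K, ENNReal.ofReal (ee k) * μP (Iset k) := by
        rw [← nsmul_eq_mul]
        exact Finset.card_nsmul_le_sum _ _ _ hterm
      have h2 : (N:ℝ≥0∞) ≤ ((Finset.Icc k₀' K).card : ℝ≥0∞) := by exact_mod_cast hcard
      exact le_trans (mul_le_mul_left h2 _) h1
    calc (N:ℝ≥0∞) * ENNReal.ofReal (A₁/13)
        ≤ ∑ k ∈ Finset.Icc k₀' K, ENNReal.ofReal (ee k) * μP (Iset k) := hsumge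
    _ = ∫⁻ y, (∑ k ∈ Finset.Icc k₀' K,
          Set.indicator (Iset k) (fun _ => ENNReal.ofReal (ee k)) y) ∂μP := hsum.symm
    _ ≤ _ := hmono2
  -- ## conclusion
  rw [hstep1]
  by_contra hne
  have hfin : ∫⁻ y, ENNReal.ofReal (max 0 (Real.log |deriv f (h y)|)) ∂μP ≠ ⊤ := hne
  have hrpos : ENNReal.ofReal (A₁ / 13) ≠ 0 := by
    simp only [ne_eq, ENNReal.ofReal_eq_zero, not_le]
    positivity
  have hrtop : ENNReal.ofReal (A₁ / 13) ≠ ⊤ := ENNReal.ofReal_ne_top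
  have hdiv : (∫⁻ y, ENNReal.ofReal (max 0 (Real.log |deriv f (h y)|)) ∂μP) / ENNReal.ofReal (A₁ / 13) ≠ ⊤ :=
    (ENNReal.div_lt_top hfin hrpos).ne
  obtain ⟨n, hn⟩ := ENNReal.exists_nat_gt hdiv
  have := hstep2 n
  rw [← ENNReal.le_div_iff_mul_le (Or.inl hrpos) (Or.inl hrtop)] at this
  exact absurd hn (not_lt.mpr this)
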